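/- Let p ≥ 1 be a real number and let a, s, t, u ≥ 0 be real numbers. Then a + (s^{1/p} + t + u)^p ≤ ((a + s)^{1/p} + t + u)^p. -/

import Mathlib

private lemma aux_convex_step {p y Y x : ℝ} (hp : 1 ≤ p) (hy : 0 ≤ y) (hyY : y ≤ Y)
    (hx : 0 ≤ x) : Y ^ p + (y + x) ^ p ≤ y ^ p + (Y + x) ^ p := by
  set c : ℝ := Y - y with hc
  have hc0 : 0 ≤ c := by simp [hc]; linarith
  have hd : ∀ z ∈ Set.Ioi (0:ℝ), HasDerivAt (fun z : ℝ => (z + c) ^ p - z ^ p)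
      (p * (z + c) ^ (p - 1) * 1 - p * z ^ (p - 1)) z := by
    intro z hz
    have hz0 : 0 < z := hz
    exact HasDerivAt.sub
      (by have h := (Real.hasDerivAt_rpow_const (p := p) (x := z + c)
        (Or.inl (ne_of_gt (by linarith)))).comp (x := z) ((hasDerivAt_id z).add_const c); exact h)
      (Real.hasDerivAt_rpow_const (Or.inl hz0.ne'))
  have hp0 : (0:ℝ) ≤ p := by linarith
  have hmono : MonotoneOn (fun z : ℝ => (z + c) ^ p - z ^ p) (Set.Ici 0) := by
    apply monotoneOn_of_deriv_nonneg (convex_Ici 0)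
    · apply Continuous.continuousOn
      exact ((Real.continuous_rpow_const hp0).comp (continuous_id.add continuous_const)).sub
        (Real.continuous_rpow_const hp0)
    · intro z hz
      rw [interior_Ici] at hz
      exact ((hd z hz).differentiableAt.differentiableWithinAt)
    · intro z hz
      rw [interior_Ici] at hz
      have hz0 : 0 < z := hz
      rw [(hd z hz).deriv]
      have : z ^ (p - 1) ≤ (z + c) ^ (p - 1) :=
        Real.rpow_le_rpow hz0.le (by linarith) (by linarith)
      nlinarith [lt_of_lt_of_le zero_lt_one hp]
  have := hmono (Set.mem_Ici.2 hy) (Set.mem_Ici.2 (by linarith : (0:ℝ) ≤ y + x))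
    (by linarith : y ≤ y + x)
  simp only [hc] at this
  have e1 : y + (Y - y) = Y := by ring
  have e2 : y + x + (Y - y) = Y + x := by ring
  rw [e1, e2] at this
  linarith

/-- the reverse-triangle (Minkowski) step used to telescope recursive
power inequalities. -/
theorem minkowski_telescoping_step (p a s t u : ℝ) (hp : 1 ≤ p)
    (ha : 0 ≤ a) (hs : 0 ≤ s) (ht : 0 ≤ t) (hu : 0 ≤ u) :
    a + (s ^ (1 / p) + t + u) ^ p ≤ ((a + s) ^ (1 / p) + t + u) ^ p := by
  have hp0 : p ≠ 0 := by positivity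
  have hy : (0:ℝ) ≤ s ^ (1 / p) := Real.rpow_nonneg hs _
  have hyY : s ^ (1 / p) ≤ (a + s) ^ (1 / p) :=
    Real.rpow_le_rpow hs (by linarith) (by positivity)
  have key := aux_convex_step hp hy hyY (by linarith : (0:ℝ) ≤ t + u)
  have e1 : (s ^ (1 / p)) ^ p = s := by
    rw [one_div, Real.rpow_inv_rpow hs hp0]
  have e2 : ((a + s) ^ (1 / p)) ^ p = a + s := by
    rw [one_div, Real.rpow_inv_rpow (by linarith) hp0]
  rw [e1, e2] at key
  have e3 : s ^ (1 / p) + t + u = s ^ (1 / p) + (t + u) := by ring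
  have e4 : (a + s) ^ (1 / p) + t + u = (a + s) ^ (1 / p) + (t + u) := by ring
  rw [e3, e4]
  linarith
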